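/- For every ε > 0 there exist θ̄ > 0 and CDFs F_1, F_2 : ℝ → ℝ (each nondecreasing with values in [0,1] and F_i(θ̄) = 1) such that, with c = 0, each profit function π_i(p) = p·(1 − F_i(p)) is concave on [0, θ̄] with sup_{p ∈ [0,θ̄]} π_i(p) = 1 for i = 1, 2, and yet sup_{p ∈ [0,θ̄]} (π_1(p) + π_2(p))/2 ≤ 1/2 + ε. Consequently, with two equally weighted segments (α_1 = α_2 = 1/2) the profit ratio Π^U/Π* is at most 1/2 + ε, so the constant 1/2 in the half-approximation theorem for concave profit functions with common bounded support is tight. -/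

import Mathlib

set_option maxHeartbeats 1000000

private lemma affine_concaveOn (s : Set ℝ) (hs : Convex ℝ s) (c d : ℝ) :
    ConcaveOn ℝ s (fun x => c + d * x) :=
  ⟨hs, by
    intro x _ y _ a b ha hb hab
    simp only [smul_eq_mul]
    have hb' : b = 1 - a := by linarith
    subst hb'; nlinarith [sq_nonneg a]⟩

private lemma concaveOn_congr' {s : Set ℝ} {f g : ℝ → ℝ} (h : ∀ x ∈ s, f x = g x)
    (hg : ConcaveOn ℝ s g) : ConcaveOn ℝ s f :=
  ⟨hg.1, fun x hx y hy a b ha hb hab => by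
    simp only [h x hx, h y hy, h _ (hg.1 hx hy ha hb hab)]
    exact hg.2 hx hy ha hb hab⟩

theorem half_approximation_tight :
    ∀ ε : ℝ, 0 < ε →
      ∃ (θ : ℝ) (F₁ F₂ : ℝ → ℝ), 0 < θ ∧
        Monotone F₁ ∧ Monotone F₂ ∧
        (∀ p, 0 ≤ F₁ p ∧ F₁ p ≤ 1) ∧ (∀ p, 0 ≤ F₂ p ∧ F₂ p ≤ 1) ∧
        F₁ θ = 1 ∧ F₂ θ = 1 ∧
        ConcaveOn ℝ (Set.Icc 0 θ) (fun p => p * (1 - F₁ p)) ∧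
        ConcaveOn ℝ (Set.Icc 0 θ) (fun p => p * (1 - F₂ p)) ∧
        sSup ((fun p => p * (1 - F₁ p)) '' Set.Icc 0 θ) = 1 ∧
        sSup ((fun p => p * (1 - F₂ p)) '' Set.Icc 0 θ) = 1 ∧
        sSup ((fun p => (1 / 2) * (p * (1 - F₁ p)) + (1 / 2) * (p * (1 - F₂ p)))
            '' Set.Icc 0 θ) ≤ 1 / 2 + ε ∧
        sSup ((fun p => (1 / 2) * (p * (1 - F₁ p)) + (1 / 2) * (p * (1 - F₂ p)))
            '' Set.Icc 0 θ) /
          ((1 / 2) * sSup ((fun p => p * (1 - F₁ p)) '' Set.Icc 0 θ) +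
            (1 / 2) * sSup ((fun p => p * (1 - F₂ p)) '' Set.Icc 0 θ))
          ≤ 1 / 2 + ε := by
  intro ε hε
  set b : ℝ := 1 + 1/ε with hbdef
  set θ : ℝ := 2 + 1/ε with hθdef
  have hb1 : 1 < b := by simp [hbdef]; positivity
  have hb0 : 0 < b := by linarith
  have hθb : θ = b + 1 := by rw [hθdef, hbdef]; ring
  have hθ1 : 1 < θ := by linarith
  have hθ0 : 0 < θ := by linarith
  have habs : ∀ p : ℝ, p ∈ Set.Icc (0:ℝ) θ →
      p * (1 - (if p ≤ 1 then (0:ℝ) else min 1 (1 - (θ - p)/(p*b)))) = min p ((θ-p)/b) := by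
    rintro p ⟨hp0, hpθ⟩
    by_cases hp : p ≤ 1
    · rw [if_pos hp, min_eq_left]
      · ring
      · rw [le_div_iff₀ hb0]
        nlinarith [mul_nonneg hθ0.le (sub_nonneg.mpr hp)]
    · push_neg at hp
      have hp0' : 0 < p := by linarith
      rw [if_neg (not_le.mpr hp), min_eq_right (by
        have : 0 ≤ (θ - p)/(p*b) := div_nonneg (by linarith) (by positivity)
        linarith), min_eq_right (by
        rw [div_le_iff₀ hb0]
        nlinarith [mul_nonneg hθ0.le (sub_nonneg.mpr hp.le)])]
      field_simp
      ring
  have habs2 : ∀ p : ℝ, p ∈ Set.Icc (0:ℝ) θ →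
      p * (1 - (if p ≤ b then 1 - 1/b else min 1 (1 - (θ - p)/p))) = min (p/b) (θ-p) := by
    rintro p ⟨hp0, hpθ⟩
    by_cases hp : p ≤ b
    · rw [if_pos hp, min_eq_left]
      · field_simp
        try ring
      · rw [div_le_iff₀ hb0]
        nlinarith [mul_nonneg hθ0.le (sub_nonneg.mpr hp)]
    · push_neg at hp
      have hp0' : 0 < p := by linarith
      rw [if_neg (not_le.mpr hp), min_eq_right (by
        have : 0 ≤ (θ - p)/p := by
          apply div_nonneg _ hp0'.le
          linarith
        linarith), min_eq_right (by
        rw [le_div_iff₀ hb0]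
        nlinarith [mul_nonneg hθ0.le (sub_nonneg.mpr hp.le)])]
      field_simp
      ring
  -- concavity
  have hconc1 : ConcaveOn ℝ (Set.Icc 0 θ)
      (fun p => p * (1 - (if p ≤ 1 then (0:ℝ) else min 1 (1 - (θ - p)/(p*b))))) := by
    refine concaveOn_congr' ?_
      (((affine_concaveOn _ (convex_Icc _ _) 0 1).inf
        (affine_concaveOn _ (convex_Icc _ _) (θ/b) (-(1/b)))))
    intro x hx
    rw [habs x hx]
    simp only [Pi.inf_apply]
    congr 1 <;> ring
  have hconc2 : ConcaveOn ℝ (Set.Icc 0 θ)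
      (fun p => p * (1 - (if p ≤ b then 1 - 1/b else min 1 (1 - (θ - p)/p)))) := by
    refine concaveOn_congr' ?_
      (((affine_concaveOn _ (convex_Icc _ _) 0 (1/b)).inf
        (affine_concaveOn _ (convex_Icc _ _) θ (-1))))
    intro x hx
    rw [habs2 x hx]
    simp only [Pi.inf_apply]
    congr 1 <;> ring
  -- suprema
  have hsup1 : sSup ((fun p => p * (1 - (if p ≤ 1 then (0:ℝ)
      else min 1 (1 - (θ - p)/(p*b))))) '' Set.Icc 0 θ) = 1 := by
    apply IsGreatest.csSup_eq
    constructor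
    · exact ⟨1, ⟨zero_le_one, hθ1.le⟩, by norm_num⟩
    · rintro y ⟨p, hp, rfl⟩
      dsimp only
      rw [habs p hp]
      rcases le_total p 1 with h | h
      · exact (min_le_left _ _).trans h
      · refine (min_le_right _ _).trans ?_
        rw [div_le_one hb0]; linarith
  have hsup2 : sSup ((fun p => p * (1 - (if p ≤ b then 1 - 1/b
      else min 1 (1 - (θ - p)/p)))) '' Set.Icc 0 θ) = 1 := by
    apply IsGreatest.csSup_eq
    constructor
    · refine ⟨b, ⟨hb0.le, by linarith⟩, ?_⟩
      simp only [le_refl, if_pos]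
      field_simp
      ring
    · rintro y ⟨p, hp, rfl⟩
      dsimp only
      rw [habs2 p hp]
      rcases le_total p b with h | h
      · refine (min_le_left _ _).trans ?_
        rw [div_le_one hb0]; exact h
      · refine (min_le_right _ _).trans (by linarith)
  have heps : 1/(2*b) ≤ ε := by
    rw [div_le_iff₀ (by positivity)]
    have h2 : ε * (2*b) = 2*ε + 2 := by
      rw [hbdef]; field_simp
    linarith
  have hsupavg : sSup ((fun p => (1 / 2) * (p * (1 - (if p ≤ 1 then (0:ℝ)
        else min 1 (1 - (θ - p)/(p*b))))) + (1 / 2) * (p * (1 - (if p ≤ b then 1 - 1/b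
        else min 1 (1 - (θ - p)/p))))) '' Set.Icc 0 θ) ≤ 1/2 + ε := by
    apply Real.sSup_le
    · rintro y ⟨p, hp, rfl⟩
      dsimp only
      rw [habs p hp, habs2 p hp]
      have e1 : min p ((θ-p)/b) ≤ (θ-p)/b := min_le_right _ _
      have e2 : min (p/b) (θ-p) ≤ p/b := min_le_left _ _
      have e3 : (1/2)*((θ-p)/b) + (1/2)*(p/b) = 1/2 + 1/(2*b) := by
        rw [hθb]; field_simp
        try ring
      linarith
    · positivity
  refine ⟨θ,
    (fun p => if p ≤ 1 then 0 else min 1 (1 - (θ - p)/(p*b))),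
    (fun p => if p ≤ b then 1 - 1/b else min 1 (1 - (θ - p)/p)),
    hθ0, ?_, ?_, ?_, ?_, ?_, ?_, hconc1, hconc2, hsup1, hsup2, hsupavg, ?_⟩

  · -- Monotone F₁
    intro p q hpq
    by_cases hq : q ≤ 1
    · simp [hpq.trans hq, hq]
    · by_cases hp : p ≤ 1
      · simp only [hp, if_true, hq, if_false]
        have hq0 : 0 < q := by linarith
        refine le_min zero_le_one ?_
        have : (θ - q)/(q*b) ≤ 1 := by
          rw [div_le_one (by positivity)]
          nlinarith
        linarith
      · simp only [hp, if_false, hq, if_false]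
        have hp0 : 0 < p := by linarith
        have hq0 : 0 < q := by linarith
        refine min_le_min le_rfl ?_
        have : (θ - q)/(q*b) ≤ (θ - p)/(p*b) := by
          rw [div_le_div_iff₀ (by positivity) (by positivity)]
          nlinarith [mul_nonneg (mul_nonneg hθ0.le hb0.le) (sub_nonneg.mpr hpq)]
        linarith
  · -- Monotone F₂
    intro p q hpq
    by_cases hq : q ≤ b
    · simp [hpq.trans hq, hq]
    · by_cases hp : p ≤ b
      · simp only [hp, if_true, hq, if_false]
        have hq0 : 0 < q := by linarith
        refine le_min (by rw [sub_le_self_iff]; positivity) ?_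
        have : (θ - q)/q ≤ 1/b := by
          rw [div_le_div_iff₀ hq0 hb0]
          nlinarith
        linarith
      · simp only [hp, if_false, hq, if_false]
        have hp0 : 0 < p := by linarith
        have hq0 : 0 < q := by linarith
        refine min_le_min le_rfl ?_
        have : (θ - q)/q ≤ (θ - p)/p := by
          rw [div_le_div_iff₀ hq0 hp0]
          nlinarith [mul_nonneg hθ0.le (sub_nonneg.mpr hpq)]
        linarith
  · -- F₁ range
    intro p
    by_cases hp : p ≤ 1
    · simp [hp]
    · have hp0 : 0 < p := by linarith
      simp only [hp, if_false]
      constructor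
      · refine le_min zero_le_one ?_
        have : (θ - p)/(p*b) ≤ 1 := by
          rw [div_le_one (by positivity)]; nlinarith
        linarith
      · exact min_le_left _ _
  · -- F₂ range
    intro p
    by_cases hp : p ≤ b
    · constructor
      · simp only [hp, if_true, sub_nonneg]
        rw [div_le_one hb0]; linarith
      · simp only [hp, if_true, sub_le_self_iff]; positivity
    · have hp0 : 0 < p := by linarith
      simp only [hp, if_false]
      constructor
      · refine le_min zero_le_one ?_
        have : (θ - p)/p ≤ 1 := by
          rw [div_le_one hp0]; nlinarith
        linarith
      · exact min_le_left _ _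
  · -- F₁ θ = 1
    have h1 : ¬ θ ≤ 1 := not_le.mpr hθ1
    simp [h1]
  · -- F₂ θ = 1
    have : ¬ θ ≤ b := by rw [hθb]; linarith
    simp [this]
  · -- ratio
    rw [hsup1, hsup2]
    have h1 : (1/2)*(1:ℝ) + (1/2)*1 = 1 := by norm_num
    rw [h1, div_one]
    exact hsupavg
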